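/- Every zero-free sequence of length greater than n/2 in Z/nZ contains a term that generates Z/nZ (i.e., has order n). -/

import Mathlib

/-- A list in an additive commutative group is zero-free if no nonempty
sublist sums to zero. -/
def ZeroFree {G : Type*} [AddCommGroup G] (l : List G) : Prop :=
  ∀ t : List G, t.Sublist l → t ≠ [] → t.sum ≠ 0

/-- The sumset of a list: all sums of nonempty sublists. -/
def sumset {G : Type*} [AddCommGroup G] (l : List G) : Set G :=
  {x | ∃ t : List G, t.Sublist l ∧ t ≠ [] ∧ t.sum = x}

namespace ZFAux
set_option linter.unusedSectionVars false

variable {G : Type*} [AddCommGroup G] [DecidableEq G]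

/-- Finset of sums of nonempty sublists. -/
def SS : List G → Finset G
  | [] => ∅
  | a :: l => (insert (0 : G) (SS l)).image (a + ·) ∪ SS l

lemma mem_SS {l : List G} {v : G} :
    v ∈ SS l ↔ ∃ t : List G, t.Sublist l ∧ t ≠ [] ∧ t.sum = v := by
  induction l generalizing v with
  | nil =>
    simp only [SS, Finset.notMem_empty, false_iff]
    rintro ⟨t, ht, hne, -⟩
    exact hne (List.sublist_nil.mp ht)
  | cons a l ih =>
    constructor
    · intro hv
      simp only [SS, Finset.mem_union, Finset.mem_image, Finset.mem_insert] at hv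
      rcases hv with ⟨w, hw | hw, rfl⟩ | hv
      · exact ⟨[a], by simp [hw], by simp, by simp [hw]⟩
      · obtain ⟨t, ht, hne, rfl⟩ := ih.mp hw
        exact ⟨a :: t, ht.cons₂ a, by simp, by simp⟩
      · obtain ⟨t, ht, hne, rfl⟩ := ih.mp hv
        exact ⟨t, ht.cons a, hne, rfl⟩
    · rintro ⟨t, ht, hne, rfl⟩
      rcases List.sublist_cons_iff.mp ht with ht | ⟨r, rfl, hr⟩
      · simp only [SS, Finset.mem_union]
        exact Or.inr (ih.mpr ⟨t, ht, hne, rfl⟩)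
      · simp only [SS, Finset.mem_union, Finset.mem_image, Finset.mem_insert]
        rcases eq_or_ne r [] with rfl | hrne
        · exact Or.inl ⟨0, Or.inl rfl, by simp⟩
        · exact Or.inl ⟨r.sum, Or.inr (ih.mpr ⟨r, hr, hrne, rfl⟩), by simp⟩

lemma SS_cons (a : G) (l : List G) :
    SS (a :: l) = (insert (0 : G) (SS l)).image (a + ·) ∪ SS l := rfl

lemma mem_SS_of_mem {l : List G} {a : G} (ha : a ∈ l) : a ∈ SS l :=
  mem_SS.mpr ⟨[a], List.singleton_sublist.mpr ha, by simp, by simp⟩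

lemma sum_mem_SS {l : List G} (h : l ≠ []) : l.sum ∈ SS l :=
  mem_SS.mpr ⟨l, List.Sublist.refl l, h, rfl⟩

lemma zero_not_mem_SS {l : List G} (h : ZeroFree l) : (0 : G) ∉ SS l := by
  intro h0
  obtain ⟨t, ht, hne, hsum⟩ := mem_SS.mp h0
  exact h t ht hne hsum

lemma zeroFree_sublist {l l' : List G} (h : ZeroFree l) (hl : l'.Sublist l) :
    ZeroFree l' := fun t ht hne => h t (ht.trans hl) hne

lemma SS_perm {l l' : List G} (h : l.Perm l') : SS l = SS l' := by
  ext v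
  simp only [mem_SS]
  constructor
  · rintro ⟨t, ht, hne, rfl⟩
    obtain ⟨t', ht', hts⟩ := (ht.subperm.trans h.subperm)
    refine ⟨t', hts, fun h' => hne ?_, ht'.sum_eq⟩
    · exact (h' ▸ ht' : List.Perm [] t).symm.eq_nil
  · rintro ⟨t, ht, hne, rfl⟩
    obtain ⟨t', ht', hts⟩ := (ht.subperm.trans h.symm.subperm)
    refine ⟨t', hts, fun h' => hne ?_, ht'.sum_eq⟩
    · exact (h' ▸ ht' : List.Perm [] t).symm.eq_nil

lemma zeroFree_perm {l l' : List G} (h : l.Perm l') (hz : ZeroFree l) : ZeroFree l' := by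
  intro t ht hne hsum
  obtain ⟨t', ht', hts⟩ := (ht.subperm.trans h.symm.subperm)
  exact hz t' hts (fun h' => hne ((h' ▸ ht' : List.Perm [] t).symm.eq_nil))
    (ht'.sum_eq.trans hsum)

/-- complement of a sublist -/
lemma exists_complement {t l : List G} (h : t.Sublist l) :
    ∃ u : List G, u.Sublist l ∧ t.sum + u.sum = l.sum := by
  induction h with
  | slnil => exact ⟨[], List.Sublist.refl _, by simp⟩
  | @cons t l a h ih =>
    obtain ⟨u, hu, hsum⟩ := ih
    exact ⟨a :: u, hu.cons₂ a, by simp only [List.sum_cons, ← hsum]; abel⟩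
  | @cons_cons t l a h ih =>
    obtain ⟨u, hu, hsum⟩ := ih
    exact ⟨u, hu.cons a, by simp only [List.sum_cons, ← hsum]; abel⟩

lemma reflection {l : List G} {v : G} (hv : v ∈ SS l) (hne : v ≠ l.sum) :
    l.sum - v ∈ SS l := by
  obtain ⟨t, ht, htne, rfl⟩ := mem_SS.mp hv
  obtain ⟨u, hu, hsum⟩ := exists_complement ht
  have hune : u ≠ [] := by
    rintro rfl
    simp at hsum
    exact hne hsum
  exact mem_SS.mpr ⟨u, hu, hune, by rw [← hsum]; abel⟩

lemma card_SS_cons_ge {x : G} {l : List G} (h : (0:G) ∉ SS l) :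
    (SS l).card + 1 ≤ (SS (x :: l)).card := by
  have hsub : (insert (0 : G) (SS l)).image (x + ·) ⊆ SS (x :: l) := by
    rw [SS_cons]; exact Finset.subset_union_left
  calc (SS l).card + 1 = (insert (0:G) (SS l)).card := by rw [Finset.card_insert_of_notMem h]
    _ = ((insert (0 : G) (SS l)).image (x + ·)).card :=
        (Finset.card_image_of_injective _ (add_right_injective x)).symm
    _ ≤ _ := Finset.card_le_card hsub

lemma length_le_card_SS {l : List G} (h : ZeroFree l) : l.length ≤ (SS l).card := by
  induction l with
  | nil => simp
  | cons x l ih =>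
    have h' : ZeroFree l := zeroFree_sublist h (List.sublist_cons_self x l)
    calc (x :: l).length = l.length + 1 := by simp
      _ ≤ (SS l).card + 1 := by gcongr; exact ih h'
      _ ≤ _ := card_SS_cons_ge (zero_not_mem_SS h')


section MX

variable {x : G}

/-- the finite cyclic subgroup generated by `x`, as a Finset. -/
noncomputable def MX (x : G) : Finset G := (Finset.range (addOrderOf x)).image (· • x)

lemma mem_MX_iff {v : G} : v ∈ MX x ↔ ∃ j, j < addOrderOf x ∧ v = j • x := by
  simp [MX, eq_comm]

lemma nsmul_mem_MX (hd : 0 < addOrderOf x) (j : ℕ) : j • x ∈ MX x :=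
  mem_MX_iff.mpr ⟨j % addOrderOf x, Nat.mod_lt _ hd, (mod_addOrderOf_nsmul x j).symm⟩

lemma zero_mem_MX (hd : 0 < addOrderOf x) : (0 : G) ∈ MX x := by
  simpa using nsmul_mem_MX hd 0

lemma self_mem_MX (hd : 0 < addOrderOf x) : x ∈ MX x := by
  simpa using nsmul_mem_MX hd 1

lemma add_mem_MX (hd : 0 < addOrderOf x) {v w : G} (hv : v ∈ MX x) (hw : w ∈ MX x) :
    v + w ∈ MX x := by
  obtain ⟨i, -, rfl⟩ := mem_MX_iff.mp hv
  obtain ⟨j, -, rfl⟩ := mem_MX_iff.mp hw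
  rw [← add_nsmul]
  exact nsmul_mem_MX hd _

lemma neg_mem_MX (hd : 0 < addOrderOf x) {v : G} (hv : v ∈ MX x) : -v ∈ MX x := by
  obtain ⟨i, hi, rfl⟩ := mem_MX_iff.mp hv
  have : -(i • x) = (addOrderOf x - i) • x + (i • x) + -(i • x) := by
    rw [← add_nsmul, Nat.sub_add_cancel hi.le, addOrderOf_nsmul_eq_zero]
    abel
  rw [this]
  simpa using nsmul_mem_MX hd (addOrderOf x - i)

lemma sub_mem_MX (hd : 0 < addOrderOf x) {v w : G} (hv : v ∈ MX x) (hw : w ∈ MX x) :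
    v - w ∈ MX x := by
  rw [sub_eq_add_neg]; exact add_mem_MX hd hv (neg_mem_MX hd hw)

lemma sum_mem_MX (hd : 0 < addOrderOf x) {l : List G} (h : ∀ b ∈ l, b ∈ MX x) :
    l.sum ∈ MX x := by
  induction l with
  | nil => simpa using zero_mem_MX hd
  | cons a l ih =>
    rw [List.sum_cons]
    exact add_mem_MX hd (h a (by simp)) (ih fun b hb => h b (by simp [hb]))

lemma smul_mem_MX (hd : 0 < addOrderOf x) {v : G} (hv : v ∈ MX x) (j : ℕ) : j • v ∈ MX x := by
  obtain ⟨i, -, rfl⟩ := mem_MX_iff.mp hv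
  rw [smul_smul]
  exact nsmul_mem_MX hd _

/-- injectivity of nat multiples below the order -/
lemma nsmul_left_inj {i j : ℕ} (hi : i < addOrderOf x) (hj : j < addOrderOf x)
    (h : i • x = j • x) : i = j := by
  rcases Nat.lt_trichotomy i j with hij | hij | hij
  · exfalso
    have hz : (j - i) • x = 0 := by
      have h2 : (j - i) • x + i • x = 0 + j • x := by
        rw [← add_nsmul, Nat.sub_add_cancel hij.le, zero_add]
      rw [h] at h2
      exact add_right_cancel h2
    exact nsmul_ne_zero_of_lt_addOrderOf (by omega) (by omega) hz
  · exact hij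
  · exfalso
    have hz : (i - j) • x = 0 := by
      have h2 : (i - j) • x + j • x = 0 + i • x := by
        rw [← add_nsmul, Nat.sub_add_cancel hij.le, zero_add]
      rw [← h] at h2
      exact add_right_cancel h2
    exact nsmul_ne_zero_of_lt_addOrderOf (by omega) (by omega) hz

lemma MX_subset_of_mem (hd : 0 < addOrderOf x) {b : G} (hb : b ∈ MX x) : MX b ⊆ MX x := by
  intro v hv
  obtain ⟨j, -, rfl⟩ := mem_MX_iff.mp hv
  exact smul_mem_MX hd hb j

end MX


/-- Rigidity: an initial segment of multiples of `x` cannot be permuted onto itself by a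
multiplier `u` with `2 ≤ u` fixing the top element (unless trivial). -/
lemma rigidity {x : G} {u M : ℕ} (hu2 : 2 ≤ u) (hud : u < addOrderOf x)
    (hM1 : 1 ≤ M) (hM : M + 2 ≤ addOrderOf x)
    (hfwd : ∀ j ≤ M, ∃ i ≤ M, (j * u) • x = i • x)
    (honto : ∀ i ≤ M, ∃ j ≤ M, (j * u) • x = i • x)
    (hMu : (M * u) • x = M • x) : False := by
  set d := addOrderOf x with hdd
  have hd0 : 0 < d := by omega
  set f : ℕ → ℕ := fun j => (j * u) % d with hf
  have hfx : ∀ j, (f j) • x = (j * u) • x := fun j => mod_addOrderOf_nsmul x (j * u)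
  have hfwd' : ∀ j ≤ M, f j ≤ M := by
    intro j hj
    obtain ⟨i, hi, hix⟩ := hfwd j hj
    have : f j = i := nsmul_left_inj (Nat.mod_lt _ hd0) (by omega) (by rw [hfx]; exact hix)
    omega
  have honto' : ∀ i ≤ M, ∃ j ≤ M, f j = i := by
    intro i hi
    obtain ⟨j, hj, hjx⟩ := honto i hi
    exact ⟨j, hj, nsmul_left_inj (Nat.mod_lt _ hd0) (by omega) (by rw [hfx]; exact hjx)⟩
  have hfM : f M = M :=
    nsmul_left_inj (Nat.mod_lt _ hd0) (by omega) (by rw [hfx]; exact hMu)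
  have hstep : ∀ j, f (j + 1) = (f j + u) % d := by
    intro j
    show ((j + 1) * u) % d = (j * u % d + u) % d
    conv_rhs => rw [Nat.add_mod, Nat.mod_mod_of_dvd _ dvd_rfl, ← Nat.add_mod]
    congr 1
    ring
  rcases le_or_gt (M + u) (d - 1) with hcase | hcase
  · -- no-wrap case : use p = M - 1
    obtain ⟨j, hj, hfj⟩ := honto' (M - 1) (by omega)
    have hjM : j < M := by
      rcases Nat.lt_or_ge j M with h | h
      · exact h
      · exfalso; have : j = M := by omega
        rw [this, hfM] at hfj; omega
    have h1 := hfwd' (j + 1) (by omega)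
    rw [hstep j, hfj] at h1
    rw [Nat.mod_eq_of_lt (by omega)] at h1
    omega
  · -- wrap case : use p = d - 1 - u
    obtain ⟨j, hj, hfj⟩ := honto' (d - 1 - u) (by omega)
    rcases Nat.lt_or_ge j M with hjM | hjM
    · have h1 := hfwd' (j + 1) (by omega)
      rw [hstep j, hfj] at h1
      have : (d - 1 - u + u) % d = d - 1 := by
        have h9 : d - 1 - u + u = d - 1 := by omega
        rw [h9]
        exact Nat.mod_eq_of_lt (by omega)
      rw [this] at h1
      omega
    · have : j = M := by omega
      rw [this, hfM] at hfj
      omega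

/-- Two "bad pivots" are impossible. -/
lemma twopivot {P1 P2 : G} {A : Finset G} {m : ℕ}
    (hd1 : 0 < addOrderOf P1) (hd2 : 0 < addOrderOf P2)
    (hm1 : 1 ≤ m) (hm : m < addOrderOf P1)
    (harc : ∀ v ∈ A, v ∈ MX P1 → ∃ j, j ≤ m ∧ v = j • P1)
    (hco : ∀ z ∈ MX P2, P1 + z ∈ A)
    (hs : m • P1 ∈ MX P2)
    (hP : P1 ∉ MX P2) : False := by
  set d := addOrderOf P1 with hdd
  have hex : ∃ j, 0 < j ∧ j • P1 ∈ MX P2 := ⟨m, hm1, hs⟩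
  set w := Nat.find hex with hw
  obtain ⟨hw0, hwmem⟩ := Nat.find_spec hex
  have hdvd : ∀ j, j • P1 ∈ MX P2 → w ∣ j := by
    intro j hj
    by_contra hnd
    have hr0 : 0 < j % w := Nat.pos_of_ne_zero fun h => hnd (Nat.dvd_of_mod_eq_zero h)
    have hrw : j % w < w := Nat.mod_lt _ hw0
    have hrmem : (j % w) • P1 ∈ MX P2 := by
      have hrep : (w * (j / w)) • P1 + (j % w) • P1 = j • P1 := by
        rw [← add_nsmul, Nat.div_add_mod]
      have hmul : (w * (j / w)) • P1 = (j / w) • (w • P1) := by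
        rw [smul_smul, Nat.mul_comm]
      have : (j % w) • P1 = j • P1 - (j / w) • (w • P1) := by
        rw [← hmul, eq_sub_iff_add_eq, add_comm, hrep]
      rw [this]
      exact sub_mem_MX hd2 hj (smul_mem_MX hd2 hwmem _)
    exact Nat.lt_irrefl _ (lt_of_lt_of_le hrw (Nat.find_min' hex ⟨hr0, hrmem⟩))
  have hw2 : 2 ≤ w := by
    rcases Nat.lt_or_ge w 2 with h | h
    · exfalso
      apply hP
      have hw1 : Nat.find hex = 1 := by omega
      have := hwmem
      rw [hw1, one_nsmul] at this
      exact this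
    · exact h
  have hwd : w ∣ d := hdvd d (by rw [hdd, addOrderOf_nsmul_eq_zero]; exact zero_mem_MX hd2)
  have hwm : w ∣ m := hdvd m hs
  have hwlem : w ≤ m := Nat.le_of_dvd (by omega) hwm
  have hzmem : (d - w) • P1 ∈ MX P2 := by
    obtain ⟨t, ht⟩ : w ∣ (d - w) := Nat.dvd_sub hwd dvd_rfl
    rw [ht, Nat.mul_comm, ← smul_smul]
    exact smul_mem_MX hd2 hwmem t
  have hA : P1 + (d - w) • P1 ∈ A := hco _ hzmem
  have heq : P1 + (d - w) • P1 = (d - w + 1) • P1 := by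
    rw [add_nsmul, one_nsmul, add_comm]
  rw [heq] at hA
  obtain ⟨j, hjm, hjx⟩ := harc _ hA (nsmul_mem_MX hd1 _)
  have hj : d - w + 1 = j := nsmul_left_inj (by omega) (by omega) hjx
  -- w ∣ m, m < d, w ∣ d → m ≤ d - w
  obtain ⟨a, ha⟩ := hwm
  obtain ⟨b, hb⟩ := hwd
  have : a < b := by
    by_contra hab
    push_neg at hab
    have : d ≤ m := by rw [ha, hb]; exact Nat.mul_le_mul_left _ hab
    omega
  have : m ≤ d - w := by
    have : m + w ≤ d := by
      rw [ha, hb, ← Nat.mul_succ]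
      exact Nat.mul_le_mul_left _ (by omega)
    omega
  omega


section Bad

variable {x : G} {l' : List G}

/-- The core structure lemma for a "bad" pivot: if adding `x` increases the sum set by at
most one element, then the sums inside `MX x` form an initial arc `{0, x, …, (m-1)x}`,
the new element is `m • x`, cosets of `MX x` are "full", and the total sum is `m • x`. -/
lemma bad_structure (hd : 0 < addOrderOf x) (hz : ZeroFree (x :: l'))
    (hcard : (SS (x :: l')).card ≤ (SS l').card + 1) :
    ∃ m : ℕ, 1 ≤ m ∧ m < addOrderOf x ∧
      (∀ j < m, j • x ∈ insert (0:G) (SS l')) ∧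
      (∀ v ∈ insert (0:G) (SS l'), v ∈ MX x → ∃ j, j < m ∧ v = j • x) ∧
      SS (x :: l') = insert (m • x) (SS l') ∧
      (m • x ∉ insert (0:G) (SS l')) ∧
      (∀ v ∈ SS l', v ∉ MX x → ∀ z ∈ MX x, v + z ∈ SS l') ∧
      (l' ≠ [] → l'.sum = (m - 1) • x ∧ (x :: l').sum = m • x) := by
  have hz' : ZeroFree l' := zeroFree_sublist hz (List.sublist_cons_self x l')
  have h0S : (0:G) ∉ SS l' := zero_not_mem_SS hz'
  have hxne : x ≠ 0 := by
    intro h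
    exact hz [x] (by simp) (by simp) (by simp [h])
  set A : Finset G := insert (0:G) (SS l') with hA
  set B : Finset G := A.image (x + ·) with hB
  have hnegx : -x ∉ A := by
    intro h
    rcases Finset.mem_insert.mp h with h | h
    · exact hxne (by simpa [neg_eq_zero] using h.symm)
    · obtain ⟨t, ht, htne, hts⟩ := mem_SS.mp h
      exact hz (x :: t) (ht.cons₂ x) (by simp) (by simp [hts])
  have hnegxS : -x ∉ SS l' := fun h => hnegx (Finset.mem_insert_of_mem h)
  have h0B : (0:G) ∉ B := by
    intro h
    obtain ⟨a, ha, hax⟩ := Finset.mem_image.mp h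
    have : a = -x := by linear_combination (norm := abel) hax
    exact hnegx (this ▸ ha)
  have hSScons : SS (x :: l') = B ∪ SS l' := SS_cons x l'
  have hcardB : B.card = (SS l').card + 1 := by
    rw [hB, Finset.card_image_of_injective _ (add_right_injective x), hA,
      Finset.card_insert_of_notMem h0S]
  have hBsub : B ⊆ SS (x :: l') := by rw [hSScons]; exact Finset.subset_union_left
  -- SS l' ⊆ B
  have hSB : SS l' ⊆ B := by
    by_contra hnot
    obtain ⟨v, hv, hvB⟩ := Finset.not_subset.mp hnot
    have : B.card + 1 ≤ (SS (x :: l')).card := by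
      have : insert v B ⊆ SS (x :: l') := by
        intro w hw
        rcases Finset.mem_insert.mp hw with rfl | hw
        · rw [hSScons]; exact Finset.mem_union_right _ hv
        · exact hBsub hw
      calc B.card + 1 = (insert v B).card := (Finset.card_insert_of_notMem hvB).symm
        _ ≤ _ := Finset.card_le_card this
    omega
  -- the unique new element y
  have hcard1 : (B \ SS l').card = 1 := by
    have := Finset.card_sdiff_of_subset hSB
    omega
  obtain ⟨y, hy⟩ := Finset.card_eq_one.mp hcard1
  have hyB : y ∈ B := by
    have : y ∈ B \ SS l' := hy ▸ Finset.mem_singleton_self y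
    exact (Finset.mem_sdiff.mp this).1
  have hyS : y ∉ SS l' := by
    have : y ∈ B \ SS l' := hy ▸ Finset.mem_singleton_self y
    exact (Finset.mem_sdiff.mp this).2
  have hBeq : B = insert y (SS l') := by
    refine (Finset.eq_of_subset_of_card_le ?_ ?_).symm
    · intro w hw
      rcases Finset.mem_insert.mp hw with rfl | hw
      · exact hyB
      · exact hSB hw
    · rw [Finset.card_insert_of_notMem hyS, hcardB]
  have hyne0 : y ≠ 0 := fun h => h0B (h ▸ hyB)
  have hynA : y ∉ A := by
    rw [hA]
    intro h
    rcases Finset.mem_insert.mp h with h | h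
    · exact hyne0 h
    · exact hyS h
  have hSSy : SS (x :: l') = insert y (SS l') := by
    rw [hSScons, hBeq]
    ext w
    simp only [Finset.mem_union, Finset.mem_insert]
    tauto
  -- shift map facts
  have hstep0 : ∀ v ∈ A, x + v ∈ insert y (SS l') := by
    intro v hv
    rw [← hBeq]
    exact Finset.mem_image_of_mem _ hv
  have hback : ∀ v ∈ SS l', v - x ∈ A := by
    intro v hv
    obtain ⟨a, ha, hax⟩ := Finset.mem_image.mp (hSB hv)
    have : v - x = a := by linear_combination (norm := abel) hax.symm
    exact this ▸ ha
  -- y ∈ MX x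
  have hyMX : y ∈ MX x := by
    by_contra hyM
    set D : Finset G := A.filter (fun v => v - y ∈ MX x) with hD
    have hDsub : ∀ v ∈ D, ∃ w ∈ D, v = x + w := by
      intro v hvD
      obtain ⟨hvA, hvcos⟩ := Finset.mem_filter.mp hvD
      have hv0 : v ≠ 0 := by
        intro h
        apply hyM
        have : v - y = -y := by rw [h]; abel
        rw [this] at hvcos
        have := neg_mem_MX hd hvcos
        simpa using this
      have hvS : v ∈ SS l' := by
        rcases Finset.mem_insert.mp hvA with h | h
        · exact absurd h hv0
        · exact h
      refine ⟨v - x, ?_, by abel⟩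
      refine Finset.mem_filter.mpr ⟨hback v hvS, ?_⟩
      have : v - x - y = (v - y) + -x := by abel
      rw [this]
      exact add_mem_MX hd hvcos (neg_mem_MX hd (self_mem_MX hd))
    -- so D ⊆ D.image (x + ·)
    have hDD : D ⊆ D.image (x + ·) := by
      intro v hv
      obtain ⟨w, hw, rfl⟩ := hDsub v hv
      exact Finset.mem_image_of_mem _ hw
    have hyimg : y ∈ D.image (x + ·) := by
      obtain ⟨ay, hay, hayx⟩ := Finset.mem_image.mp hyB
      refine Finset.mem_image.mpr ⟨ay, ?_, hayx⟩
      refine Finset.mem_filter.mpr ⟨hay, ?_⟩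
      have : ay - y = -x := by linear_combination (norm := abel) hayx
      rw [this]
      exact neg_mem_MX hd (self_mem_MX hd)
    have hynD : y ∉ D := fun h => hynA (Finset.mem_filter.mp h).1
    have : D.card + 1 ≤ (D.image (x + ·)).card := by
      have hins : insert y D ⊆ D.image (x + ·) := by
        intro w hw
        rcases Finset.mem_insert.mp hw with rfl | hw
        · exact hyimg
        · exact hDD hw
      calc D.card + 1 = (insert y D).card := (Finset.card_insert_of_notMem hynD).symm
        _ ≤ _ := Finset.card_le_card hins
    rw [Finset.card_image_of_injective _ (add_right_injective x)] at this
    omega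
  obtain ⟨jy, hjy, hjyx⟩ := mem_MX_iff.mp hyMX
  -- define m
  have hex : ∃ j, j • x ∉ A := ⟨jy, by rw [← hjyx]; exact hynA⟩
  set m := Nat.find hex with hm
  have hmspec : m • x ∉ A := Nat.find_spec hex
  have hmmin : ∀ j < m, j • x ∈ A := fun j hj => by
    by_contra h
    exact Nat.lt_irrefl _ (lt_of_le_of_lt (Nat.find_min' hex h) hj)
  have hm1 : 1 ≤ m := by
    rcases Nat.eq_zero_or_pos m with h | h
    · exfalso; apply hmspec; rw [h]; simp [hA]
    · exact h
  have hyeq : y = m • x := by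
    have h1 : (m - 1) • x ∈ A := hmmin _ (by omega)
    have h2 := hstep0 _ h1
    have h3 : x + (m - 1) • x = m • x := by
      rw [← succ_nsmul', Nat.sub_add_cancel hm1]
    rw [h3] at h2
    rcases Finset.mem_insert.mp h2 with h | h
    · exact h.symm
    · exact absurd (Finset.mem_insert_of_mem h) hmspec
  have hmd : m < addOrderOf x := by
    have hmled : m ≤ addOrderOf x := by
      by_contra h
      push_neg at h
      have h1 : (m - addOrderOf x) • x = m • x := by
        have : m - addOrderOf x + addOrderOf x = m := by omega
        calc (m - addOrderOf x) • x = (m - addOrderOf x) • x + addOrderOf x • x := by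
              rw [addOrderOf_nsmul_eq_zero]; abel
          _ = m • x := by rw [← add_nsmul, this]
      have := hmmin (m - addOrderOf x) (by omega)
      rw [h1] at this
      exact hmspec this
    rcases lt_or_eq_of_le hmled with h | h
    · exact h
    · exfalso
      apply hyne0
      rw [hyeq, h, addOrderOf_nsmul_eq_zero]
  -- arc upper bound
  have harc : ∀ v ∈ A, v ∈ MX x → ∃ j, j < m ∧ v = j • x := by
    rintro v hv hvM
    obtain ⟨j₀, hj₀, rfl⟩ := mem_MX_iff.mp hvM
    refine ⟨j₀, ?_, rfl⟩
    by_contra hge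
    push_neg at hge
    have hdesc : ∀ t, t ≤ j₀ - m → (j₀ - t) • x ∈ A := by
      intro t
      induction t with
      | zero => intro _; simpa using hv
      | succ t ih =>
        intro ht
        have hwA := ih (by omega)
        have hne : (j₀ - t) • x ≠ 0 :=
          nsmul_ne_zero_of_lt_addOrderOf (by omega) (by omega)
        have hwS : (j₀ - t) • x ∈ SS l' := by
          rcases Finset.mem_insert.mp hwA with h | h
          · exact absurd h hne
          · exact h
        have := hback _ hwS
        have heq : (j₀ - t) • x - x = (j₀ - (t+1)) • x := by
          have h5 : (j₀ - (t+1)) + 1 = j₀ - t := by omega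
          rw [← h5, succ_nsmul]
          abel
        rw [heq] at this
        exact this
    have := hdesc (j₀ - m) (le_refl _)
    have h6 : j₀ - (j₀ - m) = m := by omega
    rw [h6] at this
    exact hmspec this
  -- coset fullness (single step first)
  have hstep1 : ∀ v, v ∈ SS l' ∧ v ∉ MX x → (x + v) ∈ SS l' ∧ (x + v) ∉ MX x := by
    rintro v ⟨hvS, hvM⟩
    have h1 := hstep0 v (Finset.mem_insert_of_mem hvS)
    have hxvM : x + v ∉ MX x := by
      intro h
      apply hvM
      have : v = (x + v) - x := by abel
      rw [this]
      exact sub_mem_MX hd h (self_mem_MX hd)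
    rcases Finset.mem_insert.mp h1 with h | h
    · exfalso; apply hxvM; rw [h, hyeq]; exact nsmul_mem_MX hd m
    · exact ⟨h, hxvM⟩
  have hfull : ∀ v ∈ SS l', v ∉ MX x → ∀ z ∈ MX x, v + z ∈ SS l' := by
    intro v hvS hvM z hz2
    obtain ⟨j, -, rfl⟩ := mem_MX_iff.mp hz2
    have : ∀ i : ℕ, (i • x + v) ∈ SS l' ∧ (i • x + v) ∉ MX x := by
      intro i
      induction i with
      | zero => simpa using ⟨hvS, hvM⟩
      | succ i ih =>
        have := hstep1 _ ih
        have heq : x + (i • x + v) = (i+1) • x + v := by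
          rw [succ_nsmul]; abel
        rw [heq] at this
        exact this
    have := (this j).1
    have heq : j • x + v = v + j • x := by abel
    rw [heq] at this
    exact this
  refine ⟨m, hm1, hmd, fun j hj => hmmin j hj, harc, by rw [hSSy, hyeq], by rw [hA] at hmspec; rw [← hyeq] at hmspec ⊢; exact hmspec, hfull, ?_⟩
  -- the sum
  intro hne
  have hsS : l'.sum ∈ SS l' := sum_mem_SS hne
  have hsum_ne : l'.sum ≠ 0 := fun h => (h ▸ hsS) |> (fun hh => h0S hh)
  -- sum ∈ MX x
  have hsM : l'.sum ∈ MX x := by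
    by_contra hsM
    obtain ⟨h1, -⟩ := hstep1 _ ⟨hsS, hsM⟩
    have hne2 : x + l'.sum ≠ l'.sum := by
      intro h
      apply hxne
      have := add_right_cancel (h.trans (zero_add l'.sum).symm)
      exact this
    have := reflection h1 hne2
    have heq : l'.sum - (x + l'.sum) = -x := by abel
    rw [heq] at this
    exact hnegxS this
  obtain ⟨j, hjm, hjeq⟩ := harc _ (Finset.mem_insert_of_mem hsS) hsM
  have hj1 : 1 ≤ j := by
    rcases Nat.eq_zero_or_pos j with h | h
    · exfalso; apply hsum_ne; rw [hjeq, h]; simp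
    · exact h
  have hjtop : j = m - 1 := by
    by_contra hne3
    have hj2 : j + 1 < m := by omega
    have hv : (j+1) • x ∈ A := hmmin _ hj2
    have hvne : (j+1) • x ≠ 0 := nsmul_ne_zero_of_lt_addOrderOf (by omega) (by omega)
    have hvS : (j+1) • x ∈ SS l' := by
      rcases Finset.mem_insert.mp hv with h | h
      · exact absurd h hvne
      · exact h
    have hvnesum : (j+1) • x ≠ l'.sum := by
      rw [hjeq]
      intro h
      have := nsmul_left_inj (x := x) (by omega) (by omega) h
      omega
    have := reflection hvS hvnesum
    have heq : l'.sum - (j+1) • x = -x := by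
      rw [hjeq, succ_nsmul]
      abel
    rw [heq] at this
    exact hnegxS this
  constructor
  · rw [hjeq, hjtop]
  · have : (x :: l').sum = x + l'.sum := by simp
    rw [this, hjeq, hjtop, ← succ_nsmul', Nat.sub_add_cancel hm1]

end Bad


section Cert

/-- Arc certificate: all terms are positive multiples of `c`, the (integer) sum of the
coefficients is less than the order of `c`, and the sums form exactly the initial arc. -/
def Cert (l : List G) : Prop :=
  ∃ (c : G) (es : Multiset ℕ), (↑l : Multiset G) = es.map (· • c) ∧
    (∀ e ∈ es, 0 < e) ∧ es.sum < addOrderOf c ∧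
    insert (0:G) (SS l) = (Finset.range (es.sum + 1)).image (· • c)

/-- Dichotomy property. -/
def GOOD (l : List G) : Prop := Cert l ∨ 2 * l.length ≤ (SS l).card + 1

lemma good_perm {l l₂ : List G} (h : l.Perm l₂) (hg : GOOD l₂) : GOOD l := by
  have hSS := SS_perm h
  have hlen := h.length_eq
  rcases hg with ⟨c, es, hmap, hpos, hsum, hset⟩ | hB
  · exact Or.inl ⟨c, es, by rwa [Multiset.coe_eq_coe.mpr h], hpos, hsum, by rwa [hSS]⟩
  · right; rw [hSS, hlen]; exact hB

lemma card_image_arc {c : G} {E : ℕ} (hE : E < addOrderOf c) :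
    ((Finset.range (E + 1)).image (· • c)).card = E + 1 := by
  rw [Finset.card_image_of_injOn, Finset.card_range]
  intro i hi j hj hij
  simp only [Finset.coe_range, Set.mem_Iio] at hi hj
  exact nsmul_left_inj (by omega) (by omega) hij

lemma cert_card {l : List G} (hz : ZeroFree l) {c : G} {es : Multiset ℕ}
    (hsum : es.sum < addOrderOf c)
    (hset : insert (0:G) (SS l) = (Finset.range (es.sum + 1)).image (· • c)) :
    (SS l).card = es.sum := by
  have h0 : (0:G) ∉ SS l := zero_not_mem_SS hz
  have := card_image_arc hsum
  rw [← hset, Finset.card_insert_of_notMem h0] at this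
  omega

lemma arc_mem_SS {l : List G} (hz : ZeroFree l) {c : G} {E : ℕ}
    (hE : E < addOrderOf c)
    (hset : insert (0:G) (SS l) = (Finset.range (E + 1)).image (· • c))
    {j : ℕ} (hj1 : 1 ≤ j) (hjE : j ≤ E) : j • c ∈ SS l := by
  have : j • c ∈ insert (0:G) (SS l) := by
    rw [hset]
    exact Finset.mem_image_of_mem _ (Finset.mem_range.mpr (by omega))
  rcases Finset.mem_insert.mp this with h | h
  · exact absurd h (nsmul_ne_zero_of_lt_addOrderOf (by omega) (by omega))
  · exact h

lemma card_le_sum_of_pos {es : Multiset ℕ} (h : ∀ e ∈ es, 0 < e) :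
    Multiset.card es ≤ es.sum := by
  induction es using Multiset.induction with
  | empty => simp
  | cons a s ih =>
    rw [Multiset.card_cons, Multiset.sum_cons]
    have ha := h a (Multiset.mem_cons_self a s)
    have := ih fun e he => h e (Multiset.mem_cons_of_mem he)
    omega

lemma cert_singleton (hord : ∀ g : G, 0 < addOrderOf g) {x : G} (hx : x ≠ 0) :
    Cert [x] := by
  refine ⟨x, {1}, by simp, by simp, ?_, ?_⟩
  · simp only [Multiset.sum_singleton]
    have h1 : addOrderOf x ≠ 1 := fun h => hx (by rwa [AddMonoid.addOrderOf_eq_one_iff] at h)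
    have := hord x
    omega
  · have : SS [x] = {x} := by
      simp [SS]
    rw [this]
    ext v
    simp only [Multiset.sum_singleton, Finset.mem_insert, Finset.mem_singleton,
      Finset.mem_image, Finset.mem_range]
    constructor
    · rintro (rfl | rfl)
      · exact ⟨0, by omega, by simp⟩
      · exact ⟨1, by omega, by simp⟩
    · rintro ⟨j, hj, rfl⟩
      interval_cases j
      · simp
      · simp

lemma arc_step (hord : ∀ g : G, 0 < addOrderOf g) {x : G} {l' : List G}
    (hz : ZeroFree (x :: l')) (hc : Cert l') : GOOD (x :: l') := by
  obtain ⟨c, es, hmap, hpos, hsum, hset⟩ := hc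
  have hz' : ZeroFree l' := zeroFree_sublist hz (List.sublist_cons_self x l')
  have h0S : (0:G) ∉ SS l' := zero_not_mem_SS hz'
  have hxne : x ≠ 0 := fun h => hz [x] (by simp) (by simp) (by simp [h])
  set E := es.sum with hE
  set D := addOrderOf c with hD
  have hcard' : (SS l').card = E := cert_card hz' hsum hset
  have hlen : l'.length ≤ E := by
    have h1 : (l' : Multiset G).card = Multiset.card (es.map (· • c)) := by rw [hmap]
    simp only [Multiset.coe_card, Multiset.card_map] at h1
    rw [h1]
    exact card_le_sum_of_pos hpos
  have hBdef : SS (x :: l') = (insert (0:G) (SS l')).image (x + ·) ∪ SS l' := SS_cons x l'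
  by_cases hxc : x ∈ MX c
  · obtain ⟨e, heD, hxe⟩ := mem_MX_iff.mp hxc
    have he1 : 1 ≤ e := by
      rcases Nat.eq_zero_or_pos e with h | h
      · exfalso; apply hxne; rw [hxe, h]; simp
      · exact h
    have hED : e + E < D := by
      by_contra hge
      push_neg at hge
      have hj1 : 1 ≤ D - e := by omega
      have hjE : D - e ≤ E := by omega
      have hmem := arc_mem_SS hz' hsum hset hj1 hjE
      obtain ⟨t, ht, htne, hts⟩ := mem_SS.mp hmem
      apply hz (x :: t) (ht.cons₂ x) (by simp)
      rw [List.sum_cons, hts, hxe, ← add_nsmul]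
      have : e + (D - e) = D := by omega
      rw [this, hD, addOrderOf_nsmul_eq_zero]
    by_cases he : e ≤ E + 1
    · left
      refine ⟨c, e ::ₘ es, ?_, ?_, ?_, ?_⟩
      · rw [Multiset.map_cons, ← hmap, ← hxe]
        rfl
      · intro f hf
        rcases Multiset.mem_cons.mp hf with rfl | hf
        · exact he1
        · exact hpos f hf
      · rw [Multiset.sum_cons]; omega
      · rw [Multiset.sum_cons]
        ext v
        simp only [Finset.mem_insert, Finset.mem_image, Finset.mem_range]
        constructor
        · intro hv
          rcases hv with rfl | hv
          · exact ⟨0, by omega, by simp⟩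
          · rw [hBdef] at hv
            rcases Finset.mem_union.mp hv with hv | hv
            · obtain ⟨a, ha, rfl⟩ := Finset.mem_image.mp hv
              have ha' : a ∈ (Finset.range (E + 1)).image (· • c) := hset ▸ ha
              obtain ⟨j, hj, rfl⟩ := Finset.mem_image.mp ha'
              rw [Finset.mem_range] at hj
              exact ⟨e + j, by omega, by rw [hxe, ← add_nsmul]⟩
            · have : v ∈ insert (0:G) (SS l') := Finset.mem_insert_of_mem hv
              rw [hset] at this
              obtain ⟨j, hj, rfl⟩ := Finset.mem_image.mp this
              rw [Finset.mem_range] at hj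
              exact ⟨j, by omega, rfl⟩
        · rintro ⟨j, hj, rfl⟩
          rcases le_or_gt j E with hjE | hjE
          · have : j • c ∈ insert (0:G) (SS l') := by
              rw [hset]
              exact Finset.mem_image_of_mem _ (Finset.mem_range.mpr (by omega))
            rcases Finset.mem_insert.mp this with h | h
            · exact Or.inl h
            · right; rw [hBdef]; exact Finset.mem_union_right _ h
          · right
            rw [hBdef]
            apply Finset.mem_union_left
            refine Finset.mem_image.mpr ⟨(j - e) • c, ?_, ?_⟩
            · rw [hset]
              exact Finset.mem_image_of_mem _ (Finset.mem_range.mpr (by omega))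
            · rw [hxe, ← add_nsmul]
              congr 1
              omega
    · -- e ≥ E + 2 : disjoint union, count
      right
      push_neg at he
      have hdisj : Disjoint ((insert (0:G) (SS l')).image (x + ·)) (SS l') := by
        rw [Finset.disjoint_right]
        intro v hv hv'
        obtain ⟨a, ha, hax⟩ := Finset.mem_image.mp hv'
        have ha' : a ∈ (Finset.range (E+1)).image (· • c) := hset ▸ ha
        obtain ⟨j', hj', rfl⟩ := Finset.mem_image.mp ha'
        rw [Finset.mem_range] at hj'
        have hvmem : v ∈ insert (0:G) (SS l') := Finset.mem_insert_of_mem hv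
        rw [hset] at hvmem
        obtain ⟨j, hj, hjv⟩ := Finset.mem_image.mp hvmem
        rw [Finset.mem_range] at hj
        have : v = (e + j') • c := by rw [← hax, hxe, ← add_nsmul]
        rw [this] at hjv
        have := nsmul_left_inj (x := c) (by omega) (by omega) hjv
        omega
      rw [hBdef, Finset.card_union_of_disjoint hdisj,
        Finset.card_image_of_injective _ (add_right_injective x),
        Finset.card_insert_of_notMem h0S, hcard']
      simp only [List.length_cons]
      omega
  · -- x not a multiple of c : disjoint
    right
    have hdisj : Disjoint ((insert (0:G) (SS l')).image (x + ·)) (SS l') := by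
      rw [Finset.disjoint_right]
      intro v hv hv'
      obtain ⟨a, ha, hax⟩ := Finset.mem_image.mp hv'
      have ha' : a ∈ (Finset.range (E+1)).image (· • c) := hset ▸ ha
      obtain ⟨j', hj', rfl⟩ := Finset.mem_image.mp ha'
      rw [Finset.mem_range] at hj'
      have hvmem : v ∈ insert (0:G) (SS l') := Finset.mem_insert_of_mem hv
      rw [hset] at hvmem
      obtain ⟨j, hj, hjv⟩ := Finset.mem_image.mp hvmem
      rw [Finset.mem_range] at hj
      apply hxc
      have hxeq : x = j • c - j' • c := by
        linear_combination (norm := abel) hax - hjv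
      rw [hxeq]
      exact sub_mem_MX (hord c) (nsmul_mem_MX (hord c) j) (nsmul_mem_MX (hord c) j')
    rw [hBdef, Finset.card_union_of_disjoint hdisj,
      Finset.card_image_of_injective _ (add_right_injective x),
      Finset.card_insert_of_notMem h0S, hcard']
    simp only [List.length_cons]
    omega

end Cert


section Main

open scoped Classical in
/-- minimal coefficient of `b` as a multiple of `x` (0 if not a multiple). -/
noncomputable def coeff (x b : G) : ℕ :=
  if h : ∃ j, b = j • x then Nat.find h else 0

lemma coeff_spec {x b : G} (h : b ∈ MX x) : b = coeff x b • x := by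
  obtain ⟨j, hj, rfl⟩ := mem_MX_iff.mp h
  rw [coeff]
  split_ifs with h'
  · exact Nat.find_spec h'
  · exact absurd ⟨j, rfl⟩ h'

lemma coeff_min {x b : G} {j : ℕ} (h : b = j • x) : coeff x b ≤ j := by
  have h' : ∃ k, b = k • x := ⟨j, h⟩
  rw [coeff, dif_pos h']
  exact Nat.find_min' h' h

lemma coeff_pos {x b : G} (h : b ∈ MX x) (hb : b ≠ 0) : 1 ≤ coeff x b := by
  rcases Nat.eq_zero_or_pos (coeff x b) with h0 | h1
  · exfalso; apply hb; rw [coeff_spec h, h0]; simp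
  · exact h1

lemma coeff_eq_one {x b : G} (h : b ∈ MX x) (hb : b ≠ 0) (hbx : b ≠ x) :
    coeff x b ≠ 1 := by
  intro h1
  apply hbx
  rw [coeff_spec h, h1, one_nsmul]

lemma sum_of_const {x : G} {t : List G} (h : ∀ b ∈ t, b = x) : t.sum = t.length • x := by
  induction t with
  | nil => simp
  | cons a t ih =>
    rw [List.sum_cons, List.length_cons, ih fun b hb => h b (by simp [hb]),
      h a (by simp), succ_nsmul']

lemma SS_const_subset {x : G} {L : List G} (h : ∀ b ∈ L, b = x) :
    SS L ⊆ (Finset.Icc 1 L.length).image (· • x) := by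
  intro v hv
  obtain ⟨t, ht, htne, rfl⟩ := mem_SS.mp hv
  have := sum_of_const (fun b hb => h b (ht.subset hb))
  rw [this]
  refine Finset.mem_image_of_mem _ (Finset.mem_Icc.mpr ⟨?_, ht.length_le⟩)
  rcases t with _ | ⟨a, t⟩
  · exact absurd rfl htne
  · simp

/-- The main dichotomy. -/
lemma dicho (hord : ∀ g : G, 0 < addOrderOf g) :
    ∀ N, ∀ l : List G, l.length ≤ N → ZeroFree l → GOOD l := by
  intro N
  induction N with
  | zero =>
    intro l hl _
    have : l = [] := List.length_eq_zero_iff.mp (by omega)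
    subst this
    right
    simp
  | succ N ih =>
    rintro (_ | ⟨x, l'⟩) hl hz
    · right; simp
    have hz' : ZeroFree l' := zeroFree_sublist hz (List.sublist_cons_self x l')
    have hxne : x ≠ 0 := fun h => hz [x] (by simp) (by simp) (by simp [h])
    rcases eq_or_ne l' [] with rfl | hl'ne
    · exact Or.inl (cert_singleton hord hxne)
    have hlen' : l'.length ≤ N := by simpa using hl
    rcases ih l' hlen' hz' with hcert | hB
    · exact arc_step hord hz hcert
    rcases le_or_gt ((SS l').card + 2) ((SS (x::l')).card) with hgain | hgain
    · right
      simp only [List.length_cons]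
      omega
    have hcard : (SS (x::l')).card ≤ (SS l').card + 1 := by omega
    obtain ⟨m, hm1, hmd, hmarc_lo, hmarc_hi, hSSeq, hmnot, hfull, hsum⟩ :=
      bad_structure (hord x) hz hcard
    obtain ⟨hsuml', hsuml⟩ := hsum hl'ne
    have hSSsub : SS l' ⊆ SS (x :: l') := by
      rw [hSSeq]; exact Finset.subset_insert _ _
    -- the pivot-b machinery, shared by both cases
    have pivotb : ∀ b ∈ l', b ≠ x →
        GOOD (x :: l') ∨
        (∃ mb : ℕ, 1 ≤ mb ∧ mb < addOrderOf b ∧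
          (∀ v ∈ insert (0:G) (SS (x :: l')), v ∈ MX b → ∃ j, j ≤ mb ∧ v = j • b) ∧
          (∀ j, j ≤ mb → j • b ∈ insert (0:G) (SS (x :: l'))) ∧
          (∀ v ∈ SS (x :: l'), v ≠ mb • b → v ∉ MX b → ∀ z ∈ MX b, v + z ∈ SS (x :: l')) ∧
          mb • b = m • x) := by
      intro b hb hbnex
      have hbmem : b ∈ (x :: l') := by simp [hb]
      have hperm : (x :: l').Perm (b :: x :: l'.erase b) := by
        have h1 : l'.Perm (b :: l'.erase b) := List.perm_cons_erase hb
        exact (h1.cons x).trans (List.Perm.swap b x _)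
      set l₂ := x :: l'.erase b with hl₂
      have hzb : ZeroFree (b :: l₂) := zeroFree_perm hperm hz
      have hz₂ : ZeroFree l₂ := zeroFree_sublist hzb (List.sublist_cons_self b l₂)
      have hlen₂ : l₂.length ≤ N := by
        have h9 := List.length_erase_of_mem hb
        have h8 : 1 ≤ l'.length := List.length_pos_iff.mpr hl'ne
        have h7 : (x :: l').length ≤ N + 1 := hl
        simp only [List.length_cons] at h7 ⊢
        rw [hl₂]
        simp only [List.length_cons, h9]
        omega
      have hSSb : SS (b :: l₂) = SS (x :: l') := SS_perm hperm.symm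
      rcases ih l₂ hlen₂ hz₂ with hc₂ | hB₂
      · exact Or.inl (good_perm hperm (arc_step hord hzb hc₂))
      rcases le_or_gt ((SS l₂).card + 2) ((SS (b::l₂)).card) with hgain₂ | hgain₂
      · left
        right
        have hpl : (b :: l₂).length = (x :: l').length := hperm.symm.length_eq
        simp only [List.length_cons] at *
        rw [← hSSb]
        omega
      have hcard₂ : (SS (b::l₂)).card ≤ (SS l₂).card + 1 := by omega
      obtain ⟨mb, hmb1, hmbd, hmbarc_lo, hmbarc_hi, hSSeqb, hmbnot, hfullb, hsumb⟩ :=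
        bad_structure (hord b) hzb hcard₂
      obtain ⟨hsuml₂, hsumlb⟩ := hsumb (by simp [hl₂])
      have hσ : mb • b = m • x := by
        rw [← hsumlb, ← hsuml]
        exact (hperm.sum_eq).symm
      refine Or.inr ⟨mb, hmb1, hmbd, ?_, ?_, ?_, hσ⟩
      · intro v hv hvM
        rcases Finset.mem_insert.mp hv with rfl | hv
        · exact ⟨0, by omega, by simp⟩
        rw [← hSSb, hSSeqb] at hv
        rcases Finset.mem_insert.mp hv with rfl | hv
        · exact ⟨mb, le_refl _, rfl⟩
        · obtain ⟨j, hj, hjv⟩ := hmbarc_hi v (Finset.mem_insert_of_mem hv) hvM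
          exact ⟨j, by omega, hjv⟩
      · intro j hj
        rcases lt_or_eq_of_le hj with hj | rfl
        · have := hmbarc_lo j hj
          rcases Finset.mem_insert.mp this with h | h
          · exact h ▸ Finset.mem_insert_self _ _
          · exact Finset.mem_insert_of_mem (by rw [← hSSb, hSSeqb]; exact Finset.mem_insert_of_mem h)
        · apply Finset.mem_insert_of_mem
          rw [← hSSb, hSSeqb]
          exact Finset.mem_insert_self _ _
      · intro v hv hvne hvM z hz2
        rw [← hSSb, hSSeqb] at hv
        rcases Finset.mem_insert.mp hv with h | hv
        · exact absurd h hvne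
        · have := hfullb v hv hvM z hz2
          rw [← hSSb, hSSeqb]
          exact Finset.mem_insert_of_mem this
    by_cases hout : ∀ b ∈ l', b ∈ MX x
    · -- all sums are multiples of x : the arc case
      have hsums_in : ∀ v ∈ SS l', v ∈ MX x := by
        intro v hv
        obtain ⟨t, ht, htne, rfl⟩ := mem_SS.mp hv
        exact sum_mem_MX (hord x) fun g hg => hout g (ht.subset hg)
      have hAeq : insert (0:G) (SS (x::l')) = (Finset.range (m+1)).image (· • x) := by
        ext v
        simp only [Finset.mem_insert, Finset.mem_image, Finset.mem_range]
        constructor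
        · intro hv
          rcases hv with rfl | hv
          · exact ⟨0, by omega, by simp⟩
          rw [hSSeq] at hv
          rcases Finset.mem_insert.mp hv with rfl | hv
          · exact ⟨m, by omega, rfl⟩
          · obtain ⟨j, hj, hjv⟩ := hmarc_hi v (Finset.mem_insert_of_mem hv) (hsums_in v hv)
            exact ⟨j, by omega, hjv.symm⟩
        · rintro ⟨j, hj, rfl⟩
          rcases Nat.lt_or_ge j m with hjm | hjm
          · have := hmarc_lo j hjm
            rcases Finset.mem_insert.mp this with h | h
            · exact Or.inl h
            · exact Or.inr (hSSsub h)
          · have : j = m := by omega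
            subst this
            right
            rw [hSSeq]
            exact Finset.mem_insert_self _ _
      have hcm : (SS (x::l')).card = m := by
        have h1 := card_image_arc (c := x) hmd
        rw [← hAeq, Finset.card_insert_of_notMem (zero_not_mem_SS hz)] at h1
        omega
      rcases le_or_gt (2 * (x::l').length) (m + 1) with hmB | hmB
      · right
        rw [hcm]
        exact hmB
      by_cases hEm : 1 + (l'.map (coeff x)).sum = m
      · -- certificate
        left
        refine ⟨x, 1 ::ₘ (↑(l'.map (coeff x)) : Multiset ℕ), ?_, ?_, ?_, ?_⟩
        · rw [Multiset.map_cons, one_nsmul]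
          have h9 : (↑(l'.map (coeff x)) : Multiset ℕ).map (· • x) = (↑l' : Multiset G) := by
            rw [Multiset.map_coe, List.map_map]
            congr 1
            have h8 : ∀ a ∈ l', ((· • x) ∘ coeff x) a = id a :=
              fun a ha => (coeff_spec (hout a ha)).symm
            rw [List.map_congr_left h8, List.map_id]
          rw [h9]
          rfl
        · intro e he
          rcases Multiset.mem_cons.mp he with rfl | he
          · omega
          · rw [Multiset.mem_coe, List.mem_map] at he
            obtain ⟨g, hg, rfl⟩ := he
            have hgne : g ≠ 0 := fun h => hz' [g] (by simp [hg]) (by simp) (by simp [h])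
            exact coeff_pos (hout g hg) hgne
        · rw [Multiset.sum_cons, Multiset.sum_coe]
          omega
        · rw [Multiset.sum_cons, Multiset.sum_coe, hEm]
          exact hAeq
      · -- wrap : find b ≠ x and use rigidity / twopivot
        have hbex : ∃ b ∈ l', b ≠ x := by
          by_contra hall
          push_neg at hall
          apply hEm
          have hcoeffs : ∀ b ∈ l', coeff x b = 1 := by
            intro b hb
            have hbx := hall b hb
            rw [hbx]
            have h1 : coeff x x ≤ 1 := coeff_min (by simp)
            have h2 : 1 ≤ coeff x x := coeff_pos (self_mem_MX (hord x)) hxne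
            omega
          have hsum1 : (l'.map (coeff x)).sum = l'.length := by
            rw [List.sum_eq_card_nsmul (l'.map (coeff x)) 1 ?_]
            · simp [List.length_map]
            · intro e he
              rw [List.mem_map] at he
              obtain ⟨g, hg, rfl⟩ := he
              exact hcoeffs g hg
          rw [hsum1]
          -- m = l'.length + 1
          have hub : (SS (x :: l')).card ≤ (x::l').length := by
            have := SS_const_subset (x := x) (L := x :: l')
              (fun b hb => by rcases List.mem_cons.mp hb with rfl | hb; rfl; exact hall b hb)
            calc (SS (x::l')).card ≤ ((Finset.Icc 1 (x::l').length).image (· • x)).card :=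
                  Finset.card_le_card this
              _ ≤ (Finset.Icc 1 (x::l').length).card := Finset.card_image_le
              _ = (x::l').length := by rw [Nat.card_Icc]; omega
          have hlb := length_le_card_SS hz
          have : (SS (x::l')).card = (x::l').length := le_antisymm hub hlb
          rw [hcm] at this
          simp only [List.length_cons] at this
          omega
        obtain ⟨b, hb, hbnex⟩ := hbex
        rcases pivotb b hb hbnex with hgood | ⟨mb, hmb1, hmbd, hmbhi, hmblo, hmbfull, hσ⟩
        · exact hgood
        exfalso
        by_cases hxb : x ∈ MX b
        · -- rigidity case
          have hbMX : b ∈ MX x := hout b hb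
          obtain ⟨u, hud, hbu⟩ := mem_MX_iff.mp hbMX
          have hbne : b ≠ 0 := fun h => hz' [b] (by simp [hb]) (by simp) (by simp [h])
          have hu1 : 1 ≤ u := by
            rcases Nat.eq_zero_or_pos u with h | h
            · exfalso; apply hbne; rw [hbu, h]; simp
            · exact h
          have hu2 : 2 ≤ u := by
            rcases Nat.lt_or_ge u 2 with h | h
            · exfalso
              apply hbnex
              have : u = 1 := by omega
              rw [hbu, this, one_nsmul]
            · exact h
          -- mb = m
          have hMXbx : MX x ⊆ MX b := MX_subset_of_mem (hord b) hxb
          have hMXxb : MX b ⊆ MX x := MX_subset_of_mem (hord x) hbMX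
          have hsubA : (Finset.range (mb+1)).image (· • b) ⊆ insert (0:G) (SS (x::l')) := by
            intro v hv
            obtain ⟨j, hj, rfl⟩ := Finset.mem_image.mp hv
            rw [Finset.mem_range] at hj
            exact hmblo j (by omega)
          have hsubA' : insert (0:G) (SS (x::l')) ⊆ (Finset.range (mb+1)).image (· • b) := by
            intro v hv
            have hvMX : v ∈ MX b := by
              apply hMXbx
              rw [hAeq] at hv
              obtain ⟨j, hj, rfl⟩ := Finset.mem_image.mp hv
              exact nsmul_mem_MX (hord x) j
            obtain ⟨j, hj, rfl⟩ := hmbhi v hv hvMX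
            exact Finset.mem_image_of_mem _ (Finset.mem_range.mpr (by omega))
          have hmbm : mb = m := by
            have h1 := Finset.card_le_card hsubA
            have h2 := Finset.card_le_card hsubA'
            rw [card_image_arc hmbd] at h1 h2
            rw [hAeq, card_image_arc hmd] at h1 h2
            omega
          subst hmbm
          -- order equality
          have hdd : addOrderOf b = addOrderOf x := by
            have h1 : (MX x).card = addOrderOf x := by
              rw [MX, Finset.card_image_of_injOn, Finset.card_range]
              intro i hi j hj hij
              simp only [Finset.coe_range, Set.mem_Iio] at hi hj
              exact nsmul_left_inj hi hj hij
            have h2 : (MX b).card = addOrderOf b := by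
              rw [MX, Finset.card_image_of_injOn, Finset.card_range]
              intro i hi j hj hij
              simp only [Finset.coe_range, Set.mem_Iio] at hi hj
              exact nsmul_left_inj hi hj hij
            have h3 := Finset.card_le_card hMXxb
            have h4 := Finset.card_le_card hMXbx
            rw [h1, h2] at *
            omega
        -- case on m = d - 1
          rcases Nat.lt_or_ge (mb + 1) (addOrderOf x) with hmtop | hmtop
          · -- rigidity
            refine rigidity (x := x) hu2 hud hmb1 (by omega) ?_ ?_ ?_
            · intro j hj
              have hjb : j • b ∈ insert (0:G) (SS (x::l')) := hmblo j hj
              rw [hAeq] at hjb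
              obtain ⟨i, hi, hiv⟩ := Finset.mem_image.mp hjb
              rw [Finset.mem_range] at hi
              refine ⟨i, by omega, ?_⟩
              rw [hiv, hbu, smul_smul]
            · intro i hi
              have hix : i • x ∈ insert (0:G) (SS (x::l')) := by
                rw [hAeq]
                exact Finset.mem_image_of_mem _ (Finset.mem_range.mpr (by omega))
              have := hsubA' hix
              obtain ⟨j, hj, hjv⟩ := Finset.mem_image.mp this
              rw [Finset.mem_range] at hj
              refine ⟨j, by omega, ?_⟩
              rw [← hjv, hbu, smul_smul]
            · rw [← smul_smul, ← hbu]
              exact hσ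
          · -- m = d - 1 : σ = -x = -b forces b = x
            have hmtop' : mb + 1 = addOrderOf x := by omega
            have hσx : mb • x + x = 0 := by
              rw [← succ_nsmul]
              rw [show mb + 1 = addOrderOf x from hmtop']
              exact addOrderOf_nsmul_eq_zero x
            have hσb : mb • b + b = 0 := by
              rw [← succ_nsmul]
              rw [show mb + 1 = addOrderOf b from by rw [hdd]; omega]
              exact addOrderOf_nsmul_eq_zero b
            have hbx : b = x := by
              have h2 : mb • x + b = 0 := by rw [← hσ]; exact hσb
              have h3 : mb • x + b = mb • x + x := h2.trans hσx.symm
              exact add_left_cancel h3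
            exact hbnex hbx
        · -- twopivot with P1 = x, P2 = b
          refine twopivot (P1 := x) (P2 := b) (A := insert (0:G) (SS (x :: l'))) (hord x) (hord b) hm1 hmd ?_ ?_ ?_ hxb
          · intro v hv hvM
            rw [hAeq] at hv
            obtain ⟨j, hj, rfl⟩ := Finset.mem_image.mp hv
            rw [Finset.mem_range] at hj
            exact ⟨j, by omega, rfl⟩
          · intro z hz2
            have hxS : x ∈ SS (x :: l') := mem_SS_of_mem (by simp)
            have hxnemb : x ≠ mb • b := by
              intro h
              apply hxb
              rw [h]
              exact nsmul_mem_MX (hord b) mb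
            have := hmbfull x hxS hxnemb hxb z hz2
            exact Finset.mem_insert_of_mem this
          · rw [← hσ]
            exact nsmul_mem_MX (hord b) mb
    · -- some term outside MX x
      push_neg at hout
      obtain ⟨b, hb, hbM⟩ := hout
      have hbnex : b ≠ x := fun h => hbM (by rw [h]; exact self_mem_MX (hord x))
      rcases pivotb b hb hbnex with hgood | ⟨mb, hmb1, hmbd, hmbhi, hmblo, hmbfull, hσ⟩
      · exact hgood
      exfalso
      refine twopivot (P1 := b) (P2 := x) (A := insert (0:G) (SS (x :: l'))) (hord b) (hord x) hmb1 hmbd ?_ ?_ ?_ hbM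
      · intro v hv hvM
        exact hmbhi v hv hvM
      · intro z hz2
        have hbS : b ∈ SS l' := mem_SS_of_mem hb
        have := hfull b hbS hbM z hz2
        exact Finset.mem_insert_of_mem (hSSsub this)
      · rw [hσ]
        exact nsmul_mem_MX (hord x) m

end Main


lemma two_mul_card_le_sum {es : Multiset ℕ} (h : ∀ e ∈ es, 2 ≤ e) :
    2 * Multiset.card es ≤ es.sum := by
  induction es using Multiset.induction with
  | empty => simp
  | cons a s ih =>
    rw [Multiset.card_cons, Multiset.sum_cons]
    have ha := h a (Multiset.mem_cons_self a s)
    have := ih fun e he => h e (Multiset.mem_cons_of_mem he)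
    omega

end ZFAux

open ZFAux in
theorem stmt11 (n : ℕ) (hn : 1 < n) (α : List (ZMod n))
    (hlen : n < 2 * α.length) (hzf : ZeroFree α) :
    ∃ a ∈ α, addOrderOf a = n := by
  haveI : NeZero n := ⟨by omega⟩
  have hord : ∀ g : ZMod n, 0 < addOrderOf g := fun g => addOrderOf_pos g
  have hgood : GOOD α := dicho hord α.length α le_rfl hzf
  have hcardn : (SS α).card ≤ n - 1 := by
    have h0 : (0 : ZMod n) ∉ SS α := zero_not_mem_SS hzf
    have hsub : SS α ⊆ Finset.univ.erase 0 := fun v hv =>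
      Finset.mem_erase.mpr ⟨fun h => h0 (h ▸ hv), Finset.mem_univ v⟩
    calc (SS α).card ≤ (Finset.univ.erase (0 : ZMod n)).card := Finset.card_le_card hsub
      _ = Fintype.card (ZMod n) - 1 := by
          rw [Finset.card_erase_of_mem (Finset.mem_univ _), Finset.card_univ]
      _ = n - 1 := by rw [ZMod.card]
  rcases hgood with ⟨c, es, hmap, hpos, hsum, hset⟩ | hB
  · -- certificate case
    have hcardE : (SS α).card = es.sum := cert_card hzf hsum hset
    have hlenE : α.length ≤ es.sum := by
      have h1 : (α : Multiset (ZMod n)).card = Multiset.card (es.map (· • c)) := by rw [hmap]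
      simp only [Multiset.coe_card, Multiset.card_map] at h1
      rw [h1]
      exact card_le_sum_of_pos hpos
    have hDn : addOrderOf c ∣ n := by
      have := addOrderOf_dvd_card (x := c)
      rwa [ZMod.card] at this
    have hD2 : n < 2 * addOrderOf c := by omega
    have hDeq : addOrderOf c = n := by
      obtain ⟨s, hs⟩ := hDn
      have hD0 : 0 < addOrderOf c := hord c
      rcases Nat.lt_or_ge s 2 with hs2 | hs2
      · interval_cases s
        · omega
        · omega
      · exfalso
        have : 2 * addOrderOf c ≤ n := by
          calc 2 * addOrderOf c ≤ s * addOrderOf c := Nat.mul_le_mul_right _ hs2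
            _ = n := by rw [Nat.mul_comm, ← hs]
        omega
    have hone : ∃ e ∈ es, e = 1 := by
      by_contra hno
      push_neg at hno
      have h2 : ∀ e ∈ es, 2 ≤ e := by
        intro e he
        have := hpos e he
        have := hno e he
        omega
      have := two_mul_card_le_sum h2
      have hcard_es : Multiset.card es = α.length := by
        have h1 : (α : Multiset (ZMod n)).card = Multiset.card (es.map (· • c)) := by rw [hmap]
        simpa only [Multiset.coe_card, Multiset.card_map] using h1.symm
      rw [hcard_es] at this
      omega
    obtain ⟨e, he, rfl⟩ := hone
    have hc : c ∈ α := by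
      have : (1 : ℕ) • c ∈ es.map (· • c) := Multiset.mem_map_of_mem _ he
      rw [← hmap, one_nsmul] at this
      exact Multiset.mem_coe.mp this
    exact ⟨c, hc, hDeq⟩
  · -- size case : impossible
    exfalso
    omega
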